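/- Suppose x ∈ ℝ^{L_r}, z ∈ ℝ^{L_s} with x_0 = z_0 = 0 satisfy that all differences x_i - x_l (l<i), z_j - z_m (m<j), and (x_i - x_l) ± (z_j - z_m) lie in 𝒳* = {qπ/K : q∈ℤ} \ {nπ : n∈ℤ}. Then the three sets {x_i mod π : 1≤i≤L_r-1}, {z_j mod π : 1≤j≤L_s-1}, and {(x_i + z_j) mod π : 1≤i≤L_r-1, 1≤j≤L_s-1} are pairwise disjoint subsets of 𝒳** = {aπ/K : a∈ℤ, 1≤a≤K-1}, with cardinalities L_r-1, L_s-1, and (L_r-1)(L_s-1) respectively; consequently L_r·L_s - 1 ≤ K - 1, i.e., L_r·L_s ≤ K. -/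

import Mathlib

open MeasureTheory Real Finset

/-- f(x,y) = Σ_{k=0}^{K-1} cos(y - 2kx). -/
noncomputable def fK (K : ℕ) (x y : ℝ) : ℝ :=
  ∑ k ∈ Finset.range K, Real.cos (y - 2 * (k : ℝ) * x)

/-- the hypercube [0, 2π)^L. -/
def cube (L : ℕ) : Set (Fin L → ℝ) := Set.univ.pi fun _ => Set.Ico 0 (2 * Real.pi)

/-- 𝒳* = {qπ/K : q ∈ ℤ} \ {nπ : n ∈ ℤ}. -/
def Xstar (K : ℕ) : Set ℝ :=
  {r | (∃ q : ℤ, r = (q : ℝ) * Real.pi / K) ∧ ∀ n : ℤ, r ≠ (n : ℝ) * Real.pi}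

/-- the representative of a modulo π lying in [0, π). -/
noncomputable def modpi (a : ℝ) : ℝ := a - Real.pi * ⌊a / Real.pi⌋

lemma xstar_neg {K : ℕ} {a : ℝ} (ha : a ∈ Xstar K) : -a ∈ Xstar K := by
  obtain ⟨⟨q, hq⟩, hn⟩ := ha
  refine ⟨⟨-q, by rw [hq]; push_cast; ring⟩, fun n h => hn (-n) ?_⟩
  push_cast
  linarith

lemma modpi_mem {K : ℕ} (hK : 1 ≤ K) {a : ℝ} (ha : a ∈ Xstar K) :
    ∃ q : ℤ, 1 ≤ q ∧ q ≤ (K:ℤ) - 1 ∧ modpi a = q * Real.pi / K := by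
  obtain ⟨⟨q, rfl⟩, hn⟩ := ha
  have hπ := Real.pi_pos
  have hK0 : (0:ℝ) < K := by exact_mod_cast hK
  have hKz : (K:ℤ) ≠ 0 := by exact_mod_cast Nat.one_le_iff_ne_zero.mp hK
  have hdiv : (q:ℝ) * Real.pi / K / Real.pi = (q:ℝ) / K := by
    field_simp
  have hfl : ⌊(q:ℝ) * Real.pi / K / Real.pi⌋ = q / K := by
    rw [hdiv, show ((q:ℝ))/(K:ℝ) = (((q:ℚ)/((K:ℕ):ℚ) : ℚ) : ℝ) by push_cast; ring,
      Rat.floor_cast, Rat.floor_intCast_div_natCast]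
  refine ⟨q % K, ?_, ?_, ?_⟩
  · rcases (Int.emod_nonneg q hKz).lt_or_eq with h | h
    · omega
    · exfalso
      have e := Int.mul_ediv_add_emod q K
      have hd : q = K * (q / K) := by linarith
      exact hn (q / K) (by rw [hd, Int.mul_ediv_cancel_left _ hKz]; push_cast; field_simp)
  · have := Int.emod_lt_of_pos q (by omega : (0:ℤ) < K); omega
  · unfold modpi
    rw [hfl]
    have hq' : (K:ℤ) * (q / K) + q % K = q := Int.mul_ediv_add_emod q K
    have hq : (q:ℝ) = (K:ℝ) * ((q / (K:ℤ) : ℤ):ℝ) + ((q % (K:ℤ) : ℤ):ℝ) := by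
      exact_mod_cast hq'.symm
    field_simp
    nlinarith [hq]

lemma modpi_ne {K : ℕ} {a b : ℝ} (h : a - b ∈ Xstar K) : modpi a ≠ modpi b := by
  intro he
  apply h.2 (⌊a / Real.pi⌋ - ⌊b / Real.pi⌋)
  unfold modpi at he
  push_cast
  linarith

theorem stmt15 (K Lr Ls : ℕ) (hK : 1 ≤ K) (hLr : 1 ≤ Lr) (hLs : 1 ≤ Ls)
    (h2 : 2 < Lr + Ls)
    (x : Fin Lr → ℝ) (z : Fin Ls → ℝ)
    (hx0 : x ⟨0, by omega⟩ = 0) (hz0 : z ⟨0, by omega⟩ = 0)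
    (hx : ∀ l i : Fin Lr, l < i → x i - x l ∈ Xstar K)
    (hz : ∀ m j : Fin Ls, m < j → z j - z m ∈ Xstar K)
    (hxz : ∀ l i : Fin Lr, l < i → ∀ m j : Fin Ls, m < j →
      (x i - x l) + (z j - z m) ∈ Xstar K ∧ (x i - x l) - (z j - z m) ∈ Xstar K) :
    (({r : ℝ | ∃ i : Fin Lr, 1 ≤ (i : ℕ) ∧ r = modpi (x i)} ⊆
        {r : ℝ | ∃ q : ℤ, 1 ≤ q ∧ q ≤ (K : ℤ) - 1 ∧ r = (q : ℝ) * Real.pi / K}) ∧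
     ({r : ℝ | ∃ j : Fin Ls, 1 ≤ (j : ℕ) ∧ r = modpi (z j)} ⊆
        {r : ℝ | ∃ q : ℤ, 1 ≤ q ∧ q ≤ (K : ℤ) - 1 ∧ r = (q : ℝ) * Real.pi / K}) ∧
     ({r : ℝ | ∃ (i : Fin Lr) (j : Fin Ls), 1 ≤ (i : ℕ) ∧ 1 ≤ (j : ℕ) ∧
          r = modpi (x i + z j)} ⊆
        {r : ℝ | ∃ q : ℤ, 1 ≤ q ∧ q ≤ (K : ℤ) - 1 ∧ r = (q : ℝ) * Real.pi / K})) ∧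
    (Disjoint {r : ℝ | ∃ i : Fin Lr, 1 ≤ (i : ℕ) ∧ r = modpi (x i)}
        {r : ℝ | ∃ j : Fin Ls, 1 ≤ (j : ℕ) ∧ r = modpi (z j)} ∧
     Disjoint {r : ℝ | ∃ i : Fin Lr, 1 ≤ (i : ℕ) ∧ r = modpi (x i)}
        {r : ℝ | ∃ (i : Fin Lr) (j : Fin Ls), 1 ≤ (i : ℕ) ∧ 1 ≤ (j : ℕ) ∧
          r = modpi (x i + z j)} ∧
     Disjoint {r : ℝ | ∃ j : Fin Ls, 1 ≤ (j : ℕ) ∧ r = modpi (z j)}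
        {r : ℝ | ∃ (i : Fin Lr) (j : Fin Ls), 1 ≤ (i : ℕ) ∧ 1 ≤ (j : ℕ) ∧
          r = modpi (x i + z j)}) ∧
    ({r : ℝ | ∃ i : Fin Lr, 1 ≤ (i : ℕ) ∧ r = modpi (x i)}.ncard = Lr - 1 ∧
     {r : ℝ | ∃ j : Fin Ls, 1 ≤ (j : ℕ) ∧ r = modpi (z j)}.ncard = Ls - 1 ∧
     {r : ℝ | ∃ (i : Fin Lr) (j : Fin Ls), 1 ≤ (i : ℕ) ∧ 1 ≤ (j : ℕ) ∧
        r = modpi (x i + z j)}.ncard = (Lr - 1) * (Ls - 1)) ∧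
    Lr * Ls ≤ K := by
  set A := {r : ℝ | ∃ i : Fin Lr, 1 ≤ (i : ℕ) ∧ r = modpi (x i)} with hA
  set B := {r : ℝ | ∃ j : Fin Ls, 1 ≤ (j : ℕ) ∧ r = modpi (z j)} with hB
  set C := {r : ℝ | ∃ (i : Fin Lr) (j : Fin Ls), 1 ≤ (i : ℕ) ∧ 1 ≤ (j : ℕ) ∧
      r = modpi (x i + z j)} with hC
  set S := {r : ℝ | ∃ q : ℤ, 1 ≤ q ∧ q ≤ (K : ℤ) - 1 ∧ r = (q : ℝ) * Real.pi / K} with hS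
  -- generalized difference hypotheses
  have hx' : ∀ i l : Fin Lr, i ≠ l → x i - x l ∈ Xstar K := by
    intro i l h
    rcases h.lt_or_gt with h' | h'
    · have := xstar_neg (hx i l h'); rwa [neg_sub] at this
    · exact hx l i h'
  have hz' : ∀ j m : Fin Ls, j ≠ m → z j - z m ∈ Xstar K := by
    intro j m h
    rcases h.lt_or_gt with h' | h'
    · have := xstar_neg (hz j m h'); rwa [neg_sub] at this
    · exact hz m j h'
  have hcross : ∀ (i l : Fin Lr) (j m : Fin Ls), i ≠ l ∨ j ≠ m →
      (x i + z j) - (x l + z m) ∈ Xstar K := by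
    intro i l j m hne
    by_cases hil : i = l
    · subst hil
      have e : (x i + z j) - (x i + z m) = z j - z m := by ring
      rw [e]; exact hz' j m (hne.resolve_left (by simp))
    by_cases hjm : j = m
    · subst hjm
      have e : (x i + z j) - (x l + z j) = x i - x l := by ring
      rw [e]; exact hx' i l hil
    rcases Ne.lt_or_gt hil with h1 | h1 <;> rcases Ne.lt_or_gt hjm with h2 | h2
    · have h := xstar_neg (hxz i l h1 j m h2).1
      have e : (x i + z j) - (x l + z m) = -((x l - x i) + (z m - z j)) := by ring
      rw [e]; exact h
    · have h := xstar_neg (hxz i l h1 m j h2).2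
      have e : (x i + z j) - (x l + z m) = -((x l - x i) - (z j - z m)) := by ring
      rw [e]; exact h
    · have h := (hxz l i h1 j m h2).2
      have e : (x i + z j) - (x l + z m) = (x i - x l) - (z m - z j) := by ring
      rw [e]; exact h
    · have h := (hxz l i h1 m j h2).1
      have e : (x i + z j) - (x l + z m) = (x i - x l) + (z j - z m) := by ring
      rw [e]; exact h
  have hne0x : ∀ i : Fin Lr, 1 ≤ (i : ℕ) → i ≠ ⟨0, by omega⟩ := by
    intro i hi h
    rw [h] at hi; simp at hi
  have hne0z : ∀ j : Fin Ls, 1 ≤ (j : ℕ) → j ≠ ⟨0, by omega⟩ := by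
    intro j hj h
    rw [h] at hj; simp at hj
  have hxmem : ∀ i : Fin Lr, 1 ≤ (i : ℕ) → x i ∈ Xstar K := by
    intro i hi
    have := hx' i ⟨0, by omega⟩ (hne0x i hi)
    rwa [hx0, sub_zero] at this
  have hzmem : ∀ j : Fin Ls, 1 ≤ (j : ℕ) → z j ∈ Xstar K := by
    intro j hj
    have := hz' j ⟨0, by omega⟩ (hne0z j hj)
    rwa [hz0, sub_zero] at this
  have hxzmem : ∀ (i : Fin Lr) (j : Fin Ls), 1 ≤ (i : ℕ) → 1 ≤ (j : ℕ) →
      x i + z j ∈ Xstar K := by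
    intro i j hi hj
    have := hcross i ⟨0, by omega⟩ j ⟨0, by omega⟩ (Or.inl (hne0x i hi))
    rwa [hx0, hz0, add_zero, sub_zero] at this
  -- subsets
  have hsubA : A ⊆ S := by
    rintro r ⟨i, hi, rfl⟩
    exact modpi_mem hK (hxmem i hi)
  have hsubB : B ⊆ S := by
    rintro r ⟨j, hj, rfl⟩
    exact modpi_mem hK (hzmem j hj)
  have hsubC : C ⊆ S := by
    rintro r ⟨i, j, hi, hj, rfl⟩
    exact modpi_mem hK (hxzmem i j hi hj)
  -- disjointness
  have hdAB : Disjoint A B := by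
    rw [Set.disjoint_left]
    rintro r ⟨i, hi, rfl⟩ ⟨j, hj, he⟩
    have hd := hcross i ⟨0, by omega⟩ ⟨0, by omega⟩ j (Or.inl (hne0x i hi))
    rw [hx0, hz0, add_zero, zero_add] at hd
    exact modpi_ne hd he
  have hdAC : Disjoint A C := by
    rw [Set.disjoint_left]
    rintro r ⟨i, hi, rfl⟩ ⟨l, j, hl, hj, he⟩
    have hd := hcross i l ⟨0, by omega⟩ j (Or.inr (Ne.symm (hne0z j hj)))
    rw [hz0, add_zero] at hd
    exact modpi_ne hd he
  have hdBC : Disjoint B C := by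
    rw [Set.disjoint_left]
    rintro r ⟨j, hj, rfl⟩ ⟨l, m, hl, hm, he⟩
    have hd := hcross ⟨0, by omega⟩ l j m (Or.inl (Ne.symm (hne0x l hl)))
    rw [hx0, zero_add] at hd
    exact modpi_ne hd he
  -- cardinalities
  have hAeq : A = (fun i : Fin Lr => modpi (x i)) '' {i : Fin Lr | 1 ≤ (i : ℕ)} := by
    ext r
    constructor
    · rintro ⟨i, hi, rfl⟩; exact ⟨i, hi, rfl⟩
    · rintro ⟨i, hi, rfl⟩; exact ⟨i, hi, rfl⟩
  have hBeq : B = (fun j : Fin Ls => modpi (z j)) '' {j : Fin Ls | 1 ≤ (j : ℕ)} := by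
    ext r
    constructor
    · rintro ⟨j, hj, rfl⟩; exact ⟨j, hj, rfl⟩
    · rintro ⟨j, hj, rfl⟩; exact ⟨j, hj, rfl⟩
  have hCeq : C = (fun p : Fin Lr × Fin Ls => modpi (x p.1 + z p.2)) ''
      ({i : Fin Lr | 1 ≤ (i : ℕ)} ×ˢ {j : Fin Ls | 1 ≤ (j : ℕ)}) := by
    ext r
    constructor
    · rintro ⟨i, j, hi, hj, rfl⟩; exact ⟨(i, j), ⟨hi, hj⟩, rfl⟩
    · rintro ⟨⟨i, j⟩, ⟨hi, hj⟩, rfl⟩; exact ⟨i, j, hi, hj, rfl⟩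
  have hinjx : Set.InjOn (fun i : Fin Lr => modpi (x i)) {i : Fin Lr | 1 ≤ (i : ℕ)} := by
    intro i _ l _ he
    by_contra hne
    exact modpi_ne (hx' i l hne) he
  have hinjz : Set.InjOn (fun j : Fin Ls => modpi (z j)) {j : Fin Ls | 1 ≤ (j : ℕ)} := by
    intro j _ m _ he
    by_contra hne
    exact modpi_ne (hz' j m hne) he
  have hinjc : Set.InjOn (fun p : Fin Lr × Fin Ls => modpi (x p.1 + z p.2))
      ({i : Fin Lr | 1 ≤ (i : ℕ)} ×ˢ {j : Fin Ls | 1 ≤ (j : ℕ)}) := by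
    rintro ⟨i, j⟩ _ ⟨l, m⟩ _ he
    by_contra hne
    have hne' : i ≠ l ∨ j ≠ m := by
      by_contra hc
      push_neg at hc
      exact hne (Prod.ext hc.1 hc.2)
    exact modpi_ne (hcross i l j m hne') he
  have hIx : {i : Fin Lr | 1 ≤ (i : ℕ)} =
      ↑(Finset.univ.erase (⟨0, by omega⟩ : Fin Lr)) := by
    ext i
    simp [Fin.ext_iff]
    omega
  have hIz : {j : Fin Ls | 1 ≤ (j : ℕ)} =
      ↑(Finset.univ.erase (⟨0, by omega⟩ : Fin Ls)) := by
    ext j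
    simp [Fin.ext_iff]
    omega
  have hcardIx : {i : Fin Lr | 1 ≤ (i : ℕ)}.ncard = Lr - 1 := by
    rw [hIx, Set.ncard_coe_finset, Finset.card_erase_of_mem (Finset.mem_univ _),
      Finset.card_univ, Fintype.card_fin]
  have hcardIz : {j : Fin Ls | 1 ≤ (j : ℕ)}.ncard = Ls - 1 := by
    rw [hIz, Set.ncard_coe_finset, Finset.card_erase_of_mem (Finset.mem_univ _),
      Finset.card_univ, Fintype.card_fin]
  have hcardA : A.ncard = Lr - 1 := by
    rw [hAeq, Set.ncard_image_of_injOn hinjx, hcardIx]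
  have hcardB : B.ncard = Ls - 1 := by
    rw [hBeq, Set.ncard_image_of_injOn hinjz, hcardIz]
  have hcardC : C.ncard = (Lr - 1) * (Ls - 1) := by
    rw [hCeq, Set.ncard_image_of_injOn hinjc, hIx, hIz, ← Finset.coe_product,
      Set.ncard_coe_finset, Finset.card_product,
      Finset.card_erase_of_mem (Finset.mem_univ _),
      Finset.card_erase_of_mem (Finset.mem_univ _),
      Finset.card_univ, Finset.card_univ, Fintype.card_fin, Fintype.card_fin]
  -- the bound
  have hSfin : S.Finite := by
    have : S ⊆ (fun q : ℤ => (q : ℝ) * Real.pi / K) '' ↑(Finset.Icc (1:ℤ) ((K:ℤ) - 1)) := by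
      rintro r ⟨q, h1, h2, rfl⟩
      exact ⟨q, by simp [Finset.mem_Icc]; omega, rfl⟩
    exact Set.Finite.subset (Set.Finite.image _ (Finset.finite_toSet _)) this
  have hScard : S.ncard ≤ K - 1 := by
    have hsub : S ⊆ (fun q : ℤ => (q : ℝ) * Real.pi / K) '' ↑(Finset.Icc (1:ℤ) ((K:ℤ) - 1)) := by
      rintro r ⟨q, h1, h2, rfl⟩
      exact ⟨q, by simp [Finset.mem_Icc]; omega, rfl⟩
    calc S.ncard ≤ ((fun q : ℤ => (q : ℝ) * Real.pi / K) ''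
          ↑(Finset.Icc (1:ℤ) ((K:ℤ) - 1))).ncard :=
        Set.ncard_le_ncard hsub (Set.Finite.image _ (Finset.finite_toSet _))
      _ ≤ (↑(Finset.Icc (1:ℤ) ((K:ℤ) - 1)) : Set ℤ).ncard :=
        Set.ncard_image_le (Finset.finite_toSet _)
      _ = (Finset.Icc (1:ℤ) ((K:ℤ) - 1)).card := Set.ncard_coe_finset _
      _ ≤ K - 1 := by rw [Int.card_Icc]; omega
  have hAfin : A.Finite := hSfin.subset hsubA
  have hBfin : B.Finite := hSfin.subset hsubB
  have hCfin : C.Finite := hSfin.subset hsubC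
  have hUsub : A ∪ B ∪ C ⊆ S := Set.union_subset (Set.union_subset hsubA hsubB) hsubC
  have hsum : (Lr - 1) + (Ls - 1) + (Lr - 1) * (Ls - 1) ≤ K - 1 := by
    have h1 : (A ∪ B ∪ C).ncard = A.ncard + B.ncard + C.ncard := by
      rw [Set.ncard_union_eq (Set.disjoint_union_left.mpr ⟨hdAC, hdBC⟩)
        (hAfin.union hBfin) hCfin, Set.ncard_union_eq hdAB hAfin hBfin]
    have h2 : (A ∪ B ∪ C).ncard ≤ K - 1 :=
      le_trans (Set.ncard_le_ncard hUsub hSfin) hScard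
    rw [h1, hcardA, hcardB, hcardC] at h2
    exact h2
  refine ⟨⟨hsubA, hsubB, hsubC⟩, ⟨hdAB, hdAC, hdBC⟩, ⟨hcardA, hcardB, hcardC⟩, ?_⟩
  obtain ⟨a, rfl⟩ : ∃ a, Lr = a + 1 := ⟨Lr - 1, by omega⟩
  obtain ⟨b, rfl⟩ : ∃ b, Ls = b + 1 := ⟨Ls - 1, by omega⟩
  simp only [Nat.add_sub_cancel] at hsum
  have hg : (a + 1) * (b + 1) = a * b + a + b + 1 := by ring
  rw [hg]
  obtain ⟨c, hc⟩ : ∃ c, a * b = c := ⟨_, rfl⟩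
  rw [hc] at hsum ⊢
  omega
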